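/- Let V be a finite nonempty set of points in ℝ². Then either there exist two points of V at distance greater than √3, or there is a closed disk of radius 1 containing all of V. -/

import Mathlib

set_option maxHeartbeats 1000000

open Metric Finset

private lemma le_one_of_sq_le_one (d : ℝ) (h0 : 0 ≤ d) (h : d ^ 2 ≤ 1) : d ≤ 1 := by
  nlinarith

private lemma sq_le_three_of_le_sqrt {d : ℝ} (h0 : 0 ≤ d) (h : d ≤ Real.sqrt 3) :
    d ^ 2 ≤ 3 := by
  nlinarith [Real.sq_sqrt (by norm_num : (0:ℝ) ≤ 3), Real.sqrt_nonneg 3]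

private lemma jung_abc (A B C : ℝ)
    (hA : A ≤ 3) (hB : B ≤ 3) (hC : C ≤ 3)
    (h1 : A ≤ B + C) (h2 : B ≤ A + C) (h3 : C ≤ A + B) :
    A * B * C ≤ 2 * (A * B + B * C + C * A) - A ^ 2 - B ^ 2 - C ^ 2 := by
  nlinarith [mul_nonneg (sub_nonneg.2 h1) (sq_nonneg (C - B)),
    mul_nonneg (sub_nonneg.2 h2) (sq_nonneg (C - A)),
    mul_nonneg (sub_nonneg.2 h3) (sq_nonneg (B - A)),
    mul_nonneg (mul_nonneg (sub_nonneg.2 h1) (sub_nonneg.2 h2)) (sub_nonneg.2 hC),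
    mul_nonneg (mul_nonneg (sub_nonneg.2 h2) (sub_nonneg.2 h3)) (sub_nonneg.2 hA),
    mul_nonneg (mul_nonneg (sub_nonneg.2 h1) (sub_nonneg.2 h3)) (sub_nonneg.2 hB)]

variable {E : Type*} [NormedAddCommGroup E] [InnerProductSpace ℝ E]

private lemma dist_sq_combo (u v w : E) (s t : ℝ) :
    dist (u + s • (v - u) + t • (w - u)) u ^ 2
      = s ^ 2 * dist u v ^ 2 + t ^ 2 * dist u w ^ 2
        + s * t * (dist u v ^ 2 + dist u w ^ 2 - dist v w ^ 2) := by
  have h1 : u + s • (v - u) + t • (w - u) - u = s • (v - u) + t • (w - u) := by abel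
  have hC : ‖v - u‖ = dist u v := by rw [dist_comm, dist_eq_norm]
  have hB : ‖w - u‖ = dist u w := by rw [dist_comm, dist_eq_norm]
  have hA : ‖(v - u) - (w - u)‖ = dist v w := by
    rw [dist_eq_norm]; congr 1; abel
  have hpq : (inner ℝ (v - u) (w - u) : ℝ)
      = (dist u v ^ 2 + dist u w ^ 2 - dist v w ^ 2) / 2 := by
    have := @norm_sub_sq_real E _ _ (v - u) (w - u)
    rw [hA, hB, hC] at this
    linarith
  rw [dist_eq_norm, h1, @norm_add_sq_real E _ _ (s • (v - u)) (t • (w - u)),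
    norm_smul, norm_smul, real_inner_smul_left, real_inner_smul_right,
    Real.norm_eq_abs, Real.norm_eq_abs, mul_pow, mul_pow, sq_abs, sq_abs, hB, hC, hpq]
  ring

private lemma jung3 (u v w : E)
    (hA : dist v w ≤ Real.sqrt 3) (hB : dist u w ≤ Real.sqrt 3)
    (hC : dist u v ≤ Real.sqrt 3) :
    ∃ x : E, dist x u ≤ 1 ∧ dist x v ≤ 1 ∧ dist x w ≤ 1 := by
  set A := dist v w ^ 2 with hA_def
  set B := dist u w ^ 2 with hB_def
  set C := dist u v ^ 2 with hC_def
  have hA3 : A ≤ 3 := sq_le_three_of_le_sqrt dist_nonneg hA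
  have hB3 : B ≤ 3 := sq_le_three_of_le_sqrt dist_nonneg hB
  have hC3 : C ≤ 3 := sq_le_three_of_le_sqrt dist_nonneg hC
  have hA0 : 0 ≤ A := sq_nonneg _
  have hB0 : 0 ≤ B := sq_nonneg _
  have hC0 : 0 ≤ C := sq_nonneg _
  by_cases hc1 : B + C ≤ A
  · -- midpoint of v w
    refine ⟨u + (1/2 : ℝ) • (v - u) + (1/2 : ℝ) • (w - u), ?_, ?_, ?_⟩
    · have h := dist_sq_combo u v w (1/2) (1/2)
      refine le_one_of_sq_le_one _ dist_nonneg ?_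
      rw [h, ← hA_def, ← hB_def, ← hC_def]; linarith
    · have heq : v + (0 : ℝ) • (u - v) + (1/2 : ℝ) • (w - v)
          = u + (1/2 : ℝ) • (v - u) + (1/2 : ℝ) • (w - u) := by module
      have h := dist_sq_combo v u w 0 (1/2)
      rw [heq, dist_comm v u] at h
      refine le_one_of_sq_le_one _ dist_nonneg ?_
      rw [h, ← hA_def, ← hB_def, ← hC_def]; linarith
    · have heq : w + (1/2 : ℝ) • (v - w) + (0 : ℝ) • (u - w)
          = u + (1/2 : ℝ) • (v - u) + (1/2 : ℝ) • (w - u) := by module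
      have h := dist_sq_combo w v u (1/2) 0
      rw [heq, dist_comm w v, dist_comm w u, dist_comm v u] at h
      refine le_one_of_sq_le_one _ dist_nonneg ?_
      rw [h, ← hA_def, ← hB_def, ← hC_def]; linarith
  · by_cases hc2 : A + C ≤ B
    · -- midpoint of u w
      refine ⟨u + (0 : ℝ) • (v - u) + (1/2 : ℝ) • (w - u), ?_, ?_, ?_⟩
      · have h := dist_sq_combo u v w 0 (1/2)
        refine le_one_of_sq_le_one _ dist_nonneg ?_
        rw [h, ← hA_def, ← hB_def, ← hC_def]; linarith
      · have heq : v + (1/2 : ℝ) • (u - v) + (1/2 : ℝ) • (w - v)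
            = u + (0 : ℝ) • (v - u) + (1/2 : ℝ) • (w - u) := by module
        have h := dist_sq_combo v u w (1/2) (1/2)
        rw [heq, dist_comm v u] at h
        refine le_one_of_sq_le_one _ dist_nonneg ?_
        rw [h, ← hA_def, ← hB_def, ← hC_def]; linarith
      · have heq : w + (0 : ℝ) • (v - w) + (1/2 : ℝ) • (u - w)
            = u + (0 : ℝ) • (v - u) + (1/2 : ℝ) • (w - u) := by module
        have h := dist_sq_combo w v u 0 (1/2)
        rw [heq, dist_comm w v, dist_comm w u, dist_comm v u] at h
        refine le_one_of_sq_le_one _ dist_nonneg ?_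
        rw [h, ← hA_def, ← hB_def, ← hC_def]; linarith
    · by_cases hc3 : A + B ≤ C
      · -- midpoint of u v
        refine ⟨u + (1/2 : ℝ) • (v - u) + (0 : ℝ) • (w - u), ?_, ?_, ?_⟩
        · have h := dist_sq_combo u v w (1/2) 0
          refine le_one_of_sq_le_one _ dist_nonneg ?_
          rw [h, ← hA_def, ← hB_def, ← hC_def]; linarith
        · have heq : v + (1/2 : ℝ) • (u - v) + (0 : ℝ) • (w - v)
              = u + (1/2 : ℝ) • (v - u) + (0 : ℝ) • (w - u) := by module
          have h := dist_sq_combo v u w (1/2) 0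
          rw [heq, dist_comm v u] at h
          refine le_one_of_sq_le_one _ dist_nonneg ?_
          rw [h, ← hA_def, ← hB_def, ← hC_def]; linarith
        · have heq : w + (1/2 : ℝ) • (v - w) + (1/2 : ℝ) • (u - w)
              = u + (1/2 : ℝ) • (v - u) + (0 : ℝ) • (w - u) := by module
          have h := dist_sq_combo w v u (1/2) (1/2)
          rw [heq, dist_comm w v, dist_comm w u, dist_comm v u] at h
          refine le_one_of_sq_le_one _ dist_nonneg ?_
          rw [h, ← hA_def, ← hB_def, ← hC_def]; linarith
      · -- acute case: circumcenter
        push_neg at hc1 hc2 hc3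
        have hApos : 0 < A := by linarith
        have hBpos : 0 < B := by linarith
        have hCpos : 0 < C := by linarith
        set S : ℝ := 2 * (A * B + B * C + C * A) - A ^ 2 - B ^ 2 - C ^ 2 with hS_def
        have hSpos : 0 < S := by
          have := mul_pos hApos (by linarith : (0:ℝ) < B + C - A)
          have := mul_pos hBpos (by linarith : (0:ℝ) < A + C - B)
          have := mul_pos hCpos (by linarith : (0:ℝ) < A + B - C)
          rw [hS_def]; nlinarith
        have hkey : A * B * C ≤ S := by
          rw [hS_def]; exact jung_abc A B C hA3 hB3 hC3 hc1.le hc2.le hc3.le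
        have hratio : A * B * C / S ≤ 1 := (div_le_one hSpos).2 hkey
        set s : ℝ := B * (A + C - B) / S with hs_def
        set t : ℝ := C * (A + B - C) / S with ht_def
        have hst : 1 - s - t = A * (B + C - A) / S := by
          rw [hs_def, ht_def]
          field_simp
          rw [hS_def]; ring
        refine ⟨u + s • (v - u) + t • (w - u), ?_, ?_, ?_⟩
        · have h := dist_sq_combo u v w s t
          have hval : s ^ 2 * C + t ^ 2 * B + s * t * (C + B - A) = A * B * C / S := by
            rw [hs_def, ht_def]
            field_simp
            rw [hS_def]; ring
          refine le_one_of_sq_le_one _ dist_nonneg ?_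
          rw [h, ← hA_def, ← hB_def, ← hC_def]
          linarith [hval, hratio]
        · have heq : v + (1 - s - t) • (u - v) + t • (w - v)
              = u + s • (v - u) + t • (w - u) := by module
          have h := dist_sq_combo v u w (1 - s - t) t
          rw [heq, dist_comm v u] at h
          have hval : (1-s-t) ^ 2 * C + t ^ 2 * A + (1-s-t) * t * (C + A - B)
              = A * B * C / S := by
            rw [hst, ht_def]
            field_simp
            rw [hS_def]; ring
          refine le_one_of_sq_le_one _ dist_nonneg ?_
          rw [h, ← hA_def, ← hB_def, ← hC_def]
          linarith [hval, hratio]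
        · have heq : w + s • (v - w) + (1 - s - t) • (u - w)
              = u + s • (v - u) + t • (w - u) := by module
          have h := dist_sq_combo w v u s (1 - s - t)
          rw [heq, dist_comm w v, dist_comm w u, dist_comm v u] at h
          have hval : s ^ 2 * A + (1-s-t) ^ 2 * B + s * (1-s-t) * (A + B - C)
              = A * B * C / S := by
            rw [hst, hs_def]
            field_simp
            rw [hS_def]; ring
          refine le_one_of_sq_le_one _ dist_nonneg ?_
          rw [h, ← hA_def, ← hB_def, ← hC_def]
          linarith [hval, hratio]

/-- Either a finite nonempty point set in the plane has two points at distance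
greater than `√3`, or it is contained in some closed disk of radius 1. -/
theorem stmt_7 (V : Finset (EuclideanSpace ℝ (Fin 2))) (hV : V.Nonempty) :
    (∃ u ∈ V, ∃ v ∈ V, Real.sqrt 3 < dist u v) ∨
    (∃ x : EuclideanSpace ℝ (Fin 2), ∀ v ∈ V, dist x v ≤ 1) := by
  classical
  by_cases hfar : ∃ u ∈ V, ∃ v ∈ V, Real.sqrt 3 < dist u v
  · exact Or.inl hfar
  · right
    push_neg at hfar
    have hd : Module.finrank ℝ (EuclideanSpace ℝ (Fin 2)) = 2 := by
      simp [finrank_euclideanSpace]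
    have hinter : ∀ I ⊆ V, #I ≤ Module.finrank ℝ (EuclideanSpace ℝ (Fin 2)) + 1 →
        (⋂ i ∈ I, Metric.closedBall i 1).Nonempty := by
      intro I hIV hcard
      rw [hd] at hcard
      rcases I.eq_empty_or_nonempty with hI | hne
      · subst hI
        simp only [Finset.notMem_empty, Set.iInter_of_empty, Set.iInter_univ]
        exact Set.univ_nonempty
      · have : ∃ a b c, a ∈ V ∧ b ∈ V ∧ c ∈ V ∧
            ∀ i ∈ I, i = a ∨ i = b ∨ i = c := by
          have h03 : #I = 1 ∨ #I = 2 ∨ #I = 3 := by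
            have := Finset.card_pos.2 hne; omega
          rcases h03 with h | h | h
          · obtain ⟨x, hx⟩ := Finset.card_eq_one.1 h
            refine ⟨x, x, x, hIV (by simp [hx]), hIV (by simp [hx]), hIV (by simp [hx]), ?_⟩
            intro i hi
            rw [hx, Finset.mem_singleton] at hi
            tauto
          · obtain ⟨x, y, _, hxy⟩ := Finset.card_eq_two.1 h
            refine ⟨x, y, y, hIV (by simp [hxy]), hIV (by simp [hxy]), hIV (by simp [hxy]), ?_⟩
            intro i hi
            rw [hxy, Finset.mem_insert, Finset.mem_singleton] at hi
            tauto
          · obtain ⟨x, y, z, _, _, _, hxyz⟩ := Finset.card_eq_three.1 h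
            refine ⟨x, y, z, hIV (by simp [hxyz]), hIV (by simp [hxyz]),
              hIV (by simp [hxyz]), ?_⟩
            intro i hi
            rw [hxyz, Finset.mem_insert, Finset.mem_insert, Finset.mem_singleton] at hi
            tauto
        obtain ⟨a, b, c, haV, hbV, hcV, hIabc⟩ := this
        obtain ⟨x, hxa, hxb, hxc⟩ := jung3 a b c (hfar b hbV c hcV)
          (hfar a haV c hcV) (hfar a haV b hbV)
        refine ⟨x, Set.mem_biInter fun i hi => ?_⟩
        rcases hIabc i hi with rfl | rfl | rfl
        · exact Metric.mem_closedBall.2 hxa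
        · exact Metric.mem_closedBall.2 hxb
        · exact Metric.mem_closedBall.2 hxc
    obtain ⟨x, hx⟩ := Convex.helly_theorem' (𝕜 := ℝ)
      (F := fun v => Metric.closedBall v 1) (s := V)
      (fun i _ => convex_closedBall i 1) hinter
    exact ⟨x, fun v hv => Metric.mem_closedBall.1 (Set.mem_iInter₂.1 hx v hv)⟩
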